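/- Suppose p = mn + 1 is prime, where m, n are positive integers. Then there exists an n-tuple (z_1,...,z_n) of unimodular complex numbers such that |∑_{k=1}^n z_k^ν| ≤ √(mn+1) for all ν = 1,..., mn² + n − 1. -/

import Mathlib

open Finset

section aux

variable {p : ℕ} [Fact p.Prime]

lemma aux_sum_units (f : ZMod p → ℂ) :
    ∑ x : ZMod p, f x = f 0 + ∑ u : (ZMod p)ˣ, f ↑u := by
  classical
  have h1 : ∑ u : (ZMod p)ˣ, f ↑u = ∑ a : {x : ZMod p // x ≠ 0}, f ↑a :=
    Fintype.sum_equiv unitsEquivNeZero _ _ (fun u => rfl)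
  have h2 : ∑ x ∈ Finset.univ.filter (fun x : ZMod p => x ≠ 0), f x
      = ∑ a : {x : ZMod p // x ≠ 0}, f ↑a :=
    Finset.sum_subtype _ (by simp) f
  have h3 : Finset.univ.filter (fun x : ZMod p => x ≠ 0) = Finset.univ.erase 0 := by
    ext x; simp [Finset.mem_erase, and_comm]
  rw [h1, ← h2, h3]
  exact (Finset.add_sum_erase Finset.univ f (Finset.mem_univ 0)).symm

lemma aux_conj_gauss (χ : MulChar (ZMod p) ℂ) (ψ : AddChar (ZMod p) ℂ) :
    (starRingEnd ℂ) (gaussSum χ ψ) = gaussSum χ⁻¹ ψ⁻¹ := by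
  rw [gaussSum, gaussSum, map_sum]
  refine Finset.sum_congr rfl fun x _ => ?_
  rw [map_mul]
  congr 1
  · rw [starRingEnd_apply]
    exact χ.star_apply' x
  · exact AddChar.starComp_apply (by rw [ZMod.ringChar_zmod_n]; exact (Fact.out : p.Prime).pos) x

lemma aux_gauss_norm {χ : MulChar (ZMod p) ℂ} (hχ : χ ≠ 1) {ψ : AddChar (ZMod p) ℂ}
    (hψ : ψ.IsPrimitive) : ‖gaussSum χ ψ‖ = Real.sqrt p := by
  have h := gaussSum_mul_gaussSum_eq_card hχ hψ
  rw [← aux_conj_gauss, ZMod.card] at h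
  have h2 : (Complex.normSq (gaussSum χ ψ) : ℂ) = (p : ℂ) := by
    rw [← Complex.mul_conj]; exact h
  have h3 : Complex.normSq (gaussSum χ ψ) = (p : ℝ) := by exact_mod_cast h2
  rw [Complex.norm_def, h3]

end aux

theorem stmt_7 (m n : ℕ) (hm : 0 < m) (hn : 0 < n) (hp : (m * n + 1).Prime) :
    ∃ z : Fin n → ℂ, (∀ k, ‖z k‖ = 1) ∧
      ∀ ν : ℕ, 1 ≤ ν → ν ≤ m * n ^ 2 + n - 1 →
        ‖∑ k, z k ^ ν‖ ≤ Real.sqrt (m * n + 1) := by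
  haveI hpf : Fact (Nat.Prime (m * n + 1)) := ⟨hp⟩
  set N := m * n with hNdef
  set p := N + 1 with hpdef
  haveI : NeZero p := ⟨hp.ne_zero⟩
  have hN0 : N ≠ 0 := Nat.mul_ne_zero hm.ne' hn.ne'
  have hcard : Fintype.card (ZMod p)ˣ = N := by rw [ZMod.card_units]; omega
  obtain ⟨g, hg⟩ := IsCyclic.exists_generator (α := (ZMod p)ˣ)
  have hord : orderOf g = N := by
    rw [orderOf_eq_card_of_forall_mem_zpowers hg, Nat.card_eq_fintype_card, hcard]
  obtain ⟨ζ, hζ⟩ : ∃ ζ : ℂ, IsPrimitiveRoot ζ N := ⟨_, Complex.isPrimitiveRoot_exp N hN0⟩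
  have hζN : ζ ^ N = 1 := hζ.pow_eq_one
  have hζu : (Units.mk0 ζ (hζ.ne_zero hN0)) ∈ rootsOfUnity (Fintype.card (ZMod p)ˣ) ℂ := by
    rw [mem_rootsOfUnity, hcard, Units.ext_iff, Units.val_pow_eq_pow_val]
    exact hζN
  set χ : MulChar (ZMod p) ℂ := MulChar.ofRootOfUnity hζu hg with hχdef
  have hχg : χ ↑g = ζ := by
    have h := MulChar.ofRootOfUnity_spec hζu hg
    rw [← hχdef] at h
    rw [h]
    rfl
  have hχpow : ∀ a : ℕ, χ ↑(g ^ a) = ζ ^ a := by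
    intro a; rw [Units.val_pow_eq_pow_val, map_pow, hχg]
  have hχtriv : ∀ t : ℕ, χ ^ t = 1 → N ∣ t := by
    intro t ht
    have h1 : (χ ^ t) ↑g = 1 := by rw [ht, MulChar.one_apply_coe]
    rw [MulChar.pow_apply_coe, hχg] at h1
    exact (hζ.pow_eq_one_iff_dvd t).mp h1
  obtain ⟨ω, hω⟩ : ∃ ω : ℂ, IsPrimitiveRoot ω p := ⟨_, Complex.isPrimitiveRoot_exp p hp.ne_zero⟩
  set ψ : AddChar (ZMod p) ℂ := AddChar.zmodChar p hω.pow_eq_one with hψdef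
  have hψprim : ψ.IsPrimitive := AddChar.zmodChar_primitive_of_primitive_root p hω
  have hψnorm : ∀ x : ZMod p, ‖ψ x‖ = 1 := by
    intro x
    refine Complex.norm_eq_one_of_pow_eq_one (n := p) ?_ hp.ne_zero
    rw [← AddChar.map_nsmul_eq_pow, nsmul_eq_mul, ZMod.natCast_self, zero_mul,
      AddChar.map_zero_eq_one]
  have hχnorm : ∀ u : (ZMod p)ˣ, ‖χ ↑u‖ = 1 := by
    intro u
    refine Complex.norm_eq_one_of_pow_eq_one (n := N) ?_ hN0
    have hu : u ^ N = 1 := by rw [← hcard]; exact pow_card_eq_one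
    rw [← map_pow, ← Units.val_pow_eq_pow_val, hu, Units.val_one, map_one]
  refine ⟨fun k => χ ↑(g ^ (m * (k : ℕ))) * ψ ↑(g ^ (m * (k : ℕ))), fun k => by
      rw [norm_mul, hχnorm, hψnorm, one_mul], ?_⟩
  intro ν hν1 hν2
  show ‖∑ k : Fin n, (χ ↑(g ^ (m * (k : ℕ))) * ψ ↑(g ^ (m * (k : ℕ)))) ^ ν‖
      ≤ Real.sqrt ((m : ℝ) * n + 1)
  set F : (ZMod p)ˣ → ℂ := fun u => (χ ↑u) ^ ν * ψ ((ν : ZMod p) * ↑u) with hFdef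
  have hzpow : ∀ u : (ZMod p)ˣ, (χ ↑u * ψ ↑u) ^ ν = F u := by
    intro u
    rw [hFdef, mul_pow, ← AddChar.map_nsmul_eq_pow, nsmul_eq_mul]
  set T : ℕ → ℂ := fun j => gaussSum (χ ^ (ν + j * n)) (ψ.mulShift (ν : ZMod p)) with hTdef
  have hTunits : ∀ j : ℕ,
      T j = ∑ u : (ZMod p)ˣ, (χ ↑u) ^ (ν + j * n) * ψ ((ν : ZMod p) * ↑u) := by
    intro j
    rw [hTdef]
    show gaussSum _ _ = _
    rw [gaussSum,
      aux_sum_units (f := fun x => (χ ^ (ν + j * n)) x * (ψ.mulShift (ν : ZMod p)) x)]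
    rw [MulChar.map_nonunit _ not_isUnit_zero, zero_mul, zero_add]
    refine Finset.sum_congr rfl fun u _ => ?_
    rw [MulChar.pow_apply_coe, AddChar.mulShift_apply]
  have hsum_units : ∀ G : (ZMod p)ˣ → ℂ, ∑ u, G u = ∑ a ∈ Finset.range N, G (g ^ a) := by
    intro G
    refine (Finset.sum_nbij (fun a => g ^ a) (fun a _ => Finset.mem_univ _) ?_ ?_ ?_).symm
    · intro a ha b hb hab
      simp only [Finset.coe_range, Set.mem_Iio] at ha hb
      have h := pow_eq_pow_iff_modEq.mp hab
      rwa [hord, Nat.ModEq, Nat.mod_eq_of_lt ha, Nat.mod_eq_of_lt hb] at h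
    · intro u _
      obtain ⟨k, hk⟩ := (mem_powers_iff_mem_zpowers).mpr (hg u)
      refine ⟨k % N, ?_, ?_⟩
      · simp only [Finset.coe_range, Set.mem_Iio]
        exact Nat.mod_lt _ (Nat.pos_of_ne_zero hN0)
      · show g ^ (k % N) = u
        rw [← hord, pow_mod_orderOf]
        exact hk
    · intro a _; rfl
  have hgeom : ∀ a : ℕ,
      (if m ∣ a then (m : ℂ) else 0) = ∑ j ∈ Finset.range m, ((ζ ^ a) ^ n) ^ j := by
    intro a
    by_cases hma : m ∣ a
    · have h1 : (ζ ^ a) ^ n = 1 := by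
        rw [← pow_mul, hζ.pow_eq_one_iff_dvd]
        rw [hNdef]
        exact mul_dvd_mul_right hma n
      rw [if_pos hma]
      simp [h1]
    · have h2 : (ζ ^ a) ^ n ≠ 1 := by
        rw [← pow_mul, Ne, hζ.pow_eq_one_iff_dvd]
        intro hdvd
        rw [hNdef] at hdvd
        exact hma ((Nat.mul_dvd_mul_iff_right hn).mp hdvd)
      rw [if_neg hma, geom_sum_eq h2]
      have h3 : ((ζ ^ a) ^ n) ^ m = 1 := by
        rw [← pow_mul, ← pow_mul, show a * (n * m) = N * a by rw [hNdef]; ring, pow_mul, hζN,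
          one_pow]
      rw [h3, sub_self, zero_div]
  have key2 : (m : ℂ) * ∑ k : Fin n, (χ ↑(g ^ (m * (k : ℕ))) * ψ ↑(g ^ (m * (k : ℕ)))) ^ ν
      = ∑ j ∈ Finset.range m, T j := by
    calc (m : ℂ) * ∑ k : Fin n, (χ ↑(g ^ (m * (k : ℕ))) * ψ ↑(g ^ (m * (k : ℕ)))) ^ ν
        = ∑ k : Fin n, (m : ℂ) * F (g ^ (m * (k : ℕ))) := by
          rw [Finset.mul_sum]
          exact Finset.sum_congr rfl fun k _ => by rw [hzpow]
      _ = ∑ k ∈ Finset.range n, (m : ℂ) * F (g ^ (m * k)) :=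
          Fin.sum_univ_eq_sum_range (fun j => (m : ℂ) * F (g ^ (m * j))) n
      _ = ∑ a ∈ (Finset.range N).filter (m ∣ ·), (m : ℂ) * F (g ^ a) := by
          refine Finset.sum_nbij' (i := fun k => m * k) (j := fun a => a / m) ?_ ?_ ?_ ?_ ?_
          · intro a ha
            simp only [Finset.mem_range] at ha
            simp only [Finset.mem_filter, Finset.mem_range]
            have h5 : m * a < N := by rw [hNdef]; exact (mul_lt_mul_iff_right₀ hm).mpr ha
            exact ⟨h5, dvd_mul_right m a⟩
          · intro a ha
            simp only [Finset.mem_filter, Finset.mem_range] at ha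
            simp only [Finset.mem_range]
            have h6 : a < m * n := by rw [← hNdef]; exact ha.1
            exact Nat.div_lt_of_lt_mul h6
          · intro a _
            exact Nat.mul_div_cancel_left a hm
          · intro a ha
            simp only [Finset.mem_filter] at ha
            exact Nat.mul_div_cancel' ha.2
          · intro a _; rfl
      _ = ∑ a ∈ Finset.range N, (if m ∣ a then (m : ℂ) else 0) * F (g ^ a) := by
          rw [Finset.sum_filter]
          refine Finset.sum_congr rfl fun a _ => ?_
          split <;> simp
      _ = ∑ a ∈ Finset.range N, (∑ j ∈ Finset.range m, ((χ ↑(g ^ a)) ^ n) ^ j) * F (g ^ a) := by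
          refine Finset.sum_congr rfl fun a _ => ?_
          rw [hχpow, ← hgeom]
      _ = ∑ j ∈ Finset.range m, ∑ a ∈ Finset.range N, ((χ ↑(g ^ a)) ^ n) ^ j * F (g ^ a) := by
          simp_rw [Finset.sum_mul]
          exact Finset.sum_comm
      _ = ∑ j ∈ Finset.range m, T j := by
          refine Finset.sum_congr rfl fun j _ => ?_
          rw [hTunits j, hsum_units (fun u => (χ ↑u) ^ (ν + j * n) * ψ ((ν : ZMod p) * ↑u))]
          refine Finset.sum_congr rfl fun a _ => ?_
          rw [hFdef]
          show ((χ ↑(g ^ a)) ^ n) ^ j * ((χ ↑(g ^ a)) ^ ν * ψ ((ν : ZMod p) * ↑(g ^ a)))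
              = (χ ↑(g ^ a)) ^ (ν + j * n) * ψ ((ν : ZMod p) * ↑(g ^ a))
          rw [← pow_mul, pow_add, mul_comm n j]
          ring
  have key3 : ∀ j : ℕ, ‖T j‖ ≤ Real.sqrt p := by
    intro j
    by_cases hpν : p ∣ ν
    · have hχ' : χ ^ (ν + j * n) ≠ 1 := by
        intro h
        have hNd : N ∣ ν + j * n := hχtriv _ h
        have hnν : n ∣ ν := by
          have h1 : n ∣ ν + j * n := dvd_trans (hNdef ▸ dvd_mul_left n m) hNd
          have h2 : n ∣ j * n := dvd_mul_left n j
          have h3 := Nat.dvd_sub h1 h2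
          rwa [Nat.add_sub_cancel] at h3
        have hcop : Nat.Coprime p n := by
          rw [hpdef, hNdef, Nat.add_comm, mul_comm]
          exact (Nat.coprime_add_mul_left_left 1 n m).mpr (Nat.coprime_one_left n)
        have hdvd : p * n ∣ ν := hcop.mul_dvd_of_dvd_of_dvd hpν hnν
        have hle : p * n ≤ ν := Nat.le_of_dvd (by omega) hdvd
        have hx : m * n ^ 2 + n ≤ ν := by
          calc m * n ^ 2 + n = p * n := by rw [hpdef, hNdef]; ring
            _ ≤ ν := hle
        have h6 := le_trans hx hν2
        set A := m * n ^ 2 with hA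
        omega
      have hν0 : (ν : ZMod p) = 0 := (ZMod.natCast_eq_zero_iff ν p).mpr hpν
      have hT : T j = 0 := by
        rw [hTdef]
        show gaussSum _ _ = 0
        rw [hν0, AddChar.mulShift_zero, gaussSum]
        simp only [AddChar.one_apply, mul_one]
        exact MulChar.sum_eq_zero_of_ne_one hχ'
      rw [hT, norm_zero]
      exact Real.sqrt_nonneg _
    · have hνz : (ν : ZMod p) ≠ 0 := fun h => hpν ((ZMod.natCast_eq_zero_iff ν p).mp h)
      have hψ'ne : ψ.mulShift (ν : ZMod p) ≠ 1 := hψprim hνz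
      have hψ'prim : (ψ.mulShift (ν : ZMod p)).IsPrimitive := AddChar.IsPrimitive.of_ne_one hψ'ne
      by_cases hχ' : χ ^ (ν + j * n) = 1
      · have hT : T j = -1 := by
          rw [hTdef]
          show gaussSum _ _ = -1
          rw [hχ', gaussSum,
            aux_sum_units (f := fun x => (1 : MulChar (ZMod p) ℂ) x * (ψ.mulShift (ν : ZMod p)) x)]
          rw [MulChar.map_nonunit _ not_isUnit_zero, zero_mul, zero_add]
          have h7 : ∑ u : (ZMod p)ˣ, (1 : MulChar (ZMod p) ℂ) ↑u * (ψ.mulShift (ν : ZMod p)) ↑u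
              = ∑ u : (ZMod p)ˣ, (ψ.mulShift (ν : ZMod p)) ↑u :=
            Finset.sum_congr rfl fun u _ => by rw [MulChar.one_apply_coe, one_mul]
          rw [h7]
          have h8 := aux_sum_units (p := p) (fun x => (ψ.mulShift (ν : ZMod p)) x)
          rw [AddChar.sum_eq_zero_of_ne_one hψ'ne] at h8
          have h9 : (ψ.mulShift (ν : ZMod p)) 0 = 1 := by
            rw [AddChar.mulShift_apply, mul_zero, AddChar.map_zero_eq_one]
          rw [h9] at h8
          linear_combination -h8
        rw [hT, norm_neg, norm_one]
        rw [Real.one_le_sqrt]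
        exact_mod_cast hp.one_lt.le
      · exact (aux_gauss_norm hχ' hψ'prim).le
  have hfin : (m : ℝ) * ‖∑ k : Fin n, (χ ↑(g ^ (m * (k : ℕ))) * ψ ↑(g ^ (m * (k : ℕ)))) ^ ν‖
      ≤ (m : ℝ) * Real.sqrt p := by
    calc (m : ℝ) * ‖∑ k : Fin n, (χ ↑(g ^ (m * (k : ℕ))) * ψ ↑(g ^ (m * (k : ℕ)))) ^ ν‖
        = ‖(m : ℂ) * ∑ k : Fin n, (χ ↑(g ^ (m * (k : ℕ))) * ψ ↑(g ^ (m * (k : ℕ)))) ^ ν‖ := by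
          rw [norm_mul, Complex.norm_natCast]
      _ = ‖∑ j ∈ Finset.range m, T j‖ := by rw [key2]
      _ ≤ ∑ j ∈ Finset.range m, ‖T j‖ := norm_sum_le _ _
      _ ≤ ∑ j ∈ Finset.range m, Real.sqrt p := Finset.sum_le_sum fun j _ => key3 j
      _ = (m : ℝ) * Real.sqrt p := by
          rw [Finset.sum_const, Finset.card_range, nsmul_eq_mul]
  have hS : ‖∑ k : Fin n, (χ ↑(g ^ (m * (k : ℕ))) * ψ ↑(g ^ (m * (k : ℕ)))) ^ ν‖
      ≤ Real.sqrt p := by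
    exact (mul_le_mul_iff_right₀ (by exact_mod_cast hm : (0 : ℝ) < m)).mp hfin
  have harg : ((p : ℕ) : ℝ) = (m : ℝ) * n + 1 := by
    rw [hpdef, hNdef]; push_cast; ring
  rwa [harg] at hS
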